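/- Law of large numbers for two-sample averages of a bounded kernel: Let (xi_i)_{i>=1} and (eta_j)_{j>=1} be two mutually independent sequences of i.i.d. random elements with values in measurable spaces E_1 and E_2 respectively, and let h : E_1 x E_2 -> [0, 1] be a measurable kernel. Then as min(m, n) -> infinity, the two-sample average (1/(m n)) * sum over i = 1..m and j = 1..n of h(xi_i, eta_j) converges in probability to E[ h(xi_1, eta_1) ]. -/

import Mathlib

open MeasureTheory ProbabilityTheory Filter Set Function Topology

lemma aux_integrable_of_bounded {δ : Type*} [MeasurableSpace δ] {Q : Measure δ}
    [IsFiniteMeasure Q] {f : δ → ℝ} {C : ℝ} (hf : Measurable f) (hb : ∀ x, |f x| ≤ C) :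
    Integrable f Q :=
  ⟨hf.aestronglyMeasurable, HasFiniteIntegral.of_bounded (C := C)
    (ae_of_all _ fun x => by simpa [Real.norm_eq_abs] using hb x)⟩

lemma aux_count_diag (s : Finset ℕ) (k : ℝ) :
    ∑ i ∈ s, ∑ i' ∈ s, (if i = i' then k else 0) = s.card * k := by
  have h1 : ∀ i ∈ s, ∑ i' ∈ s, (if i = i' then k else 0) = k := by
    intro i hi
    rw [Finset.sum_ite_eq s i (fun _ => k), if_pos hi]
  rw [Finset.sum_congr rfl h1, Finset.sum_const, nsmul_eq_mul]

/-- **Law of large numbers for two-sample averages of a bounded kernel.**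
`(ξ i)` and `(η j)` are two mutually independent sequences of i.i.d. random elements of
`E₁` and `E₂`, and `h : E₁ × E₂ → [0,1]` is a measurable kernel.  Then, as
`min (m, n) → ∞`, the two-sample average `(1/(m n)) ∑_{i<m} ∑_{j<n} h (ξ i) (η j)`
converges in probability to `E[h (ξ 0) (η 0)]`. -/
theorem two_sample_lln
    {Ω E₁ E₂ : Type*} [MeasurableSpace Ω] [MeasurableSpace E₁] [MeasurableSpace E₂]
    (P : Measure Ω) [IsProbabilityMeasure P]
    (ξ : ℕ → Ω → E₁) (η : ℕ → Ω → E₂)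
    (hξm : ∀ i, Measurable (ξ i)) (hηm : ∀ j, Measurable (η j))
    -- each sequence is i.i.d.:
    (hξindep : iIndepFun ξ P)
    (hηindep : iIndepFun η P)
    (hξident : ∀ i, Measure.map (ξ i) P = Measure.map (ξ 0) P)
    (hηident : ∀ j, Measure.map (η j) P = Measure.map (η 0) P)
    -- the two sequences are mutually independent:
    (hmutual : IndepFun (fun ω i => ξ i ω) (fun ω j => η j ω) P)
    (h : E₁ → E₂ → ℝ) (hhm : Measurable (Function.uncurry h))
    (hhrange : ∀ a b, h a b ∈ Set.Icc (0 : ℝ) 1) :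
    ∀ ε > 0,
      Tendsto
        (fun mn : ℕ × ℕ =>
          P {ω | ε <
            |((mn.1 : ℝ) * (mn.2 : ℝ))⁻¹ *
                ∑ i ∈ Finset.range mn.1, ∑ j ∈ Finset.range mn.2, h (ξ i ω) (η j ω)
              - ∫ ω', h (ξ 0 ω') (η 0 ω') ∂P|})
        (Filter.comap (fun mn : ℕ × ℕ => min mn.1 mn.2) atTop) (𝓝 0) := by
  intro ε hε
  set ν₁ := P.map (ξ 0) with hν₁def
  set ν₂ := P.map (η 0) with hν₂def
  have hν₁ : IsProbabilityMeasure ν₁ := Measure.isProbabilityMeasure_map (hξm 0).aemeasurable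
  have hν₂ : IsProbabilityMeasure ν₂ := Measure.isProbabilityMeasure_map (hηm 0).aemeasurable
  set I : ℝ := ∫ x, Function.uncurry h x ∂(ν₁.prod ν₂) with hIdef
  have hint : Integrable (Function.uncurry h) (ν₁.prod ν₂) :=
    aux_integrable_of_bounded hhm (fun x => by
      have := hhrange x.1 x.2
      simp only [Function.uncurry, abs_le]
      exact ⟨by linarith [this.1], this.2⟩)
  -- law of a mixed pair
  have hpair : ∀ i j, P.map (fun ω => (ξ i ω, η j ω)) = ν₁.prod ν₂ := by
    intro i j
    have hind : IndepFun (ξ i) (η j) P :=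
      hmutual.comp (measurable_pi_apply i) (measurable_pi_apply j)
    rw [(indepFun_iff_map_prod_eq_prod_map_map (hξm i).aemeasurable
      (hηm j).aemeasurable).mp hind, hξident i, hηident j]
  -- expectation of a single term
  have hEij : ∀ i j, ∫ ω, h (ξ i ω) (η j ω) ∂P = I := by
    intro i j
    rw [hIdef, ← hpair i j,
      integral_map ((hξm i).prodMk (hηm j)).aemeasurable hhm.aestronglyMeasurable]
    rfl
  -- g a = ∫ b, h a b dν₂  and  I = ∫ g dν₁
  set g : E₁ → ℝ := fun a => ∫ b, h a b ∂ν₂ with hgdef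
  have hIg : I = ∫ a, g a ∂ν₁ := by
    rw [hIdef, integral_prod _ hint]; rfl
  -- product expectation for distinct indices
  have hquad : ∀ i i' j j', i ≠ i' → j ≠ j' →
      ∫ ω, h (ξ i ω) (η j ω) * h (ξ i' ω) (η j' ω) ∂P = I ^ 2 := by
    intro i i' j j' hii hjj
    have hA : P.map (fun ω => (ξ i ω, ξ i' ω)) = ν₁.prod ν₁ := by
      rw [(indepFun_iff_map_prod_eq_prod_map_map (hξm i).aemeasurable
        (hξm i').aemeasurable).mp (hξindep.indepFun hii), hξident i, hξident i']
    have hB : P.map (fun ω => (η j ω, η j' ω)) = ν₂.prod ν₂ := by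
      rw [(indepFun_iff_map_prod_eq_prod_map_map (hηm j).aemeasurable
        (hηm j').aemeasurable).mp (hηindep.indepFun hjj), hηident j, hηident j']
    have hAB : IndepFun (fun ω => (ξ i ω, ξ i' ω)) (fun ω => (η j ω, η j' ω)) P :=
      hmutual.comp ((measurable_pi_apply i).prodMk (measurable_pi_apply i'))
        ((measurable_pi_apply j).prodMk (measurable_pi_apply j'))
    have hQ : P.map (fun ω => ((ξ i ω, ξ i' ω), (η j ω, η j' ω)))
        = (ν₁.prod ν₁).prod (ν₂.prod ν₂) := by
      rw [(indepFun_iff_map_prod_eq_prod_map_map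
        (((hξm i).prodMk (hξm i')).aemeasurable)
        (((hηm j).prodMk (hηm j')).aemeasurable)).mp hAB, hA, hB]
    set F : (E₁ × E₁) × (E₂ × E₂) → ℝ := fun p => h p.1.1 p.2.1 * h p.1.2 p.2.2 with hFdef
    have hFm : Measurable F := by
      apply Measurable.mul
      · exact hhm.comp ((measurable_fst.comp measurable_fst).prodMk
          (measurable_fst.comp measurable_snd))
      · exact hhm.comp ((measurable_snd.comp measurable_fst).prodMk
          (measurable_snd.comp measurable_snd))
    have hFb : ∀ p, |F p| ≤ 1 := by
      intro p
      have h1 := hhrange p.1.1 p.2.1; have h2 := hhrange p.1.2 p.2.2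
      simp only [hFdef, abs_le]
      constructor
      · nlinarith [h1.1, h2.1]
      · nlinarith [h1.1, h1.2, h2.1, h2.2]
    have hFint : Integrable F ((ν₁.prod ν₁).prod (ν₂.prod ν₂)) :=
      aux_integrable_of_bounded hFm hFb
    have step1 : ∫ ω, h (ξ i ω) (η j ω) * h (ξ i' ω) (η j' ω) ∂P
        = ∫ p, F p ∂((ν₁.prod ν₁).prod (ν₂.prod ν₂)) := by
      rw [← hQ, integral_map ((((hξm i).prodMk (hξm i')).prodMk
        ((hηm j).prodMk (hηm j'))).aemeasurable) hFm.aestronglyMeasurable]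
    rw [step1, integral_prod _ hFint]
    have step2 : ∀ p : E₁ × E₁, ∫ q, F (p, q) ∂(ν₂.prod ν₂) = g p.1 * g p.2 := by
      intro p
      exact integral_prod_mul (μ := ν₂) (ν := ν₂) (fun b => h p.1 b) (fun b => h p.2 b)
    simp_rw [step2]
    rw [integral_prod_mul (μ := ν₁) (ν := ν₁) g g, ← hIg, sq]
  -- basic facts about single terms
  set f : ℕ × ℕ → Ω → ℝ := fun p ω => h (ξ p.1 ω) (η p.2 ω) with hfdef
  have hfm : ∀ p, Measurable (f p) := fun p => hhm.comp ((hξm p.1).prodMk (hηm p.2))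
  have hfb : ∀ p ω, f p ω ∈ Set.Icc (0:ℝ) 1 := fun p ω => hhrange _ _
  have hfint : ∀ p, Integrable (f p) P := fun p =>
    aux_integrable_of_bounded (C := 1) (hfm p) (fun ω => by
      have := hfb p ω; rw [abs_le]; exact ⟨by linarith [this.1], this.2⟩)
  have hffm : ∀ p q, Measurable (fun ω => f p ω * f q ω) := fun p q => (hfm p).mul (hfm q)
  have hffb : ∀ p q ω, |f p ω * f q ω| ≤ 1 := by
    intro p q ω
    have h1 := hfb p ω; have h2 := hfb q ω
    rw [abs_le]
    exact ⟨by nlinarith [h1.1, h2.1], by nlinarith [h1.1, h1.2, h2.1, h2.2]⟩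
  have hffint : ∀ p q, Integrable (fun ω => f p ω * f q ω) P := fun p q =>
    aux_integrable_of_bounded (hffm p q) (hffb p q)
  have hEf : ∀ p, ∫ ω, f p ω ∂P = I := fun p => hEij p.1 p.2
  have hEff_le : ∀ p q, ∫ ω, f p ω * f q ω ∂P ≤ 1 := by
    intro p q
    calc ∫ ω, f p ω * f q ω ∂P ≤ ∫ _ω, (1:ℝ) ∂P :=
          integral_mono (hffint p q) (integrable_const 1)
            (fun ω => (abs_le.mp (hffb p q ω)).2)
      _ = 1 := by simp
  have hEff_eq : ∀ p q : ℕ × ℕ, p.1 ≠ q.1 → p.2 ≠ q.2 →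
      ∫ ω, f p ω * f q ω ∂P = I ^ 2 := fun p q h1 h2 => hquad p.1 q.1 p.2 q.2 h1 h2
  -- the variance bound
  have hvar : ∀ m n : ℕ,
      ∫ ω, ((∑ p ∈ Finset.range m ×ˢ Finset.range n, f p ω) - (m : ℝ) * n * I) ^ 2 ∂P
        ≤ (m : ℝ) * n ^ 2 + (m : ℝ) ^ 2 * n := by
    intro m n
    set S := Finset.range m ×ˢ Finset.range n with hSdef
    set T : Ω → ℝ := fun ω => ∑ p ∈ S, f p ω with hTdef
    have hcard : (S.card : ℝ) = (m : ℝ) * n := by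
      rw [hSdef, Finset.card_product]; push_cast [Finset.card_range]; ring
    set c : ℝ := (m : ℝ) * n * I with hcdef
    have hTm : Measurable T := Finset.measurable_sum S (fun p _ => hfm p)
    have hTb : ∀ ω, |T ω| ≤ (S.card : ℝ) := by
      intro ω
      calc |T ω| ≤ ∑ p ∈ S, |f p ω| := Finset.abs_sum_le_sum_abs _ _
        _ ≤ ∑ _p ∈ S, (1:ℝ) := Finset.sum_le_sum (fun p _ => by
            have := hfb p ω; rw [abs_le]; exact ⟨by linarith [this.1], this.2⟩)
        _ = (S.card : ℝ) := by simp
    have hTint : Integrable T P := aux_integrable_of_bounded hTm hTb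
    have hT2int : Integrable (fun ω => T ω ^ 2) P :=
      aux_integrable_of_bounded (C := (S.card : ℝ) ^ 2) (hTm.pow_const 2) (fun ω => by
        rw [abs_pow]
        exact pow_le_pow_left₀ (abs_nonneg _) (hTb ω) 2)
    have hET : ∫ ω, T ω ∂P = c := by
      rw [hTdef]
      rw [integral_finset_sum S (fun p _ => hfint p)]
      simp_rw [hEf]
      rw [Finset.sum_const, nsmul_eq_mul, hcard, hcdef]
    have hET2 : ∫ ω, T ω ^ 2 ∂P = ∑ p ∈ S, ∑ q ∈ S, ∫ ω, f p ω * f q ω ∂P := by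
      have hsq : ∀ ω, T ω ^ 2 = ∑ p ∈ S, ∑ q ∈ S, f p ω * f q ω := by
        intro ω; rw [sq, hTdef, Finset.sum_mul_sum]
      simp_rw [hsq]
      rw [integral_finset_sum S (fun p _ => integrable_finset_sum S (fun q _ => hffint p q))]
      exact Finset.sum_congr rfl fun p _ => integral_finset_sum S (fun q _ => hffint p q)
    have hconst : ∑ _p ∈ S, ∑ _q ∈ S, I ^ 2 = c ^ 2 := by
      simp only [Finset.sum_const, nsmul_eq_mul, hcdef, hcard]
      ring
    have hlhs : ∫ ω, (T ω - c) ^ 2 ∂P = (∫ ω, T ω ^ 2 ∂P) - c ^ 2 := by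
      have hexp : ∀ ω, (T ω - c) ^ 2 = T ω ^ 2 - 2 * c * T ω + c ^ 2 := fun ω => by ring
      simp_rw [hexp]
      have hint1 : Integrable (fun ω => T ω ^ 2 - 2 * c * T ω) P :=
        hT2int.sub (hTint.const_mul (2 * c))
      rw [integral_add hint1 (integrable_const _),
        integral_sub hT2int (hTint.const_mul (2 * c)), integral_const_mul, hET,
        integral_const]
      simp only [measure_univ, ENNReal.toReal_one, smul_eq_mul, one_mul, probReal_univ]
      ring
    have hvar_eq : ∫ ω, (T ω - c) ^ 2 ∂P
        = ∑ p ∈ S, ∑ q ∈ S, (∫ ω, f p ω * f q ω ∂P - I ^ 2) := by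
      rw [hlhs, hET2]
      rw [← hconst, ← Finset.sum_sub_distrib]
      exact Finset.sum_congr rfl fun p _ => (Finset.sum_sub_distrib _ _).symm
    have hterm : ∀ p ∈ S, ∀ q ∈ S, ∫ ω, f p ω * f q ω ∂P - I ^ 2
        ≤ (if p.1 = q.1 then (1:ℝ) else 0) + (if p.2 = q.2 then (1:ℝ) else 0) := by
      intro p _ q _
      have hIsq : (0:ℝ) ≤ I ^ 2 := sq_nonneg I
      by_cases h1 : p.1 = q.1
      · by_cases h2 : p.2 = q.2 <;> simp [h1, h2] <;> linarith [hEff_le p q]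
      · by_cases h2 : p.2 = q.2
        · simp [h1, h2]; linarith [hEff_le p q]
        · rw [hEff_eq p q h1 h2]; simp [h1, h2]
    have hcount : ∑ p ∈ S, ∑ q ∈ S,
        ((if p.1 = q.1 then (1:ℝ) else 0) + (if p.2 = q.2 then (1:ℝ) else 0))
        = (m : ℝ) * n ^ 2 + (m : ℝ) ^ 2 * n := by
      rw [Finset.sum_congr rfl (fun p _ => Finset.sum_add_distrib), Finset.sum_add_distrib]
      congr 1
      · -- ∑_{p,q ∈ S} [p.1 = q.1] = m * n^2
        rw [hSdef]
        simp_rw [Finset.sum_product]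
        have inner : ∀ i : ℕ, ∑ i' ∈ Finset.range m, ∑ _j' ∈ Finset.range n,
            (if i = i' then (1:ℝ) else 0)
            = ∑ i' ∈ Finset.range m, (n : ℝ) * (if i = i' then (1:ℝ) else 0) := by
          intro i
          refine Finset.sum_congr rfl fun i' _ => ?_
          rw [Finset.sum_const, nsmul_eq_mul, Finset.card_range]
        calc ∑ i ∈ Finset.range m, ∑ _j ∈ Finset.range n, ∑ i' ∈ Finset.range m,
              ∑ _j' ∈ Finset.range n, (if i = i' then (1:ℝ) else 0)
            = ∑ i ∈ Finset.range m, ∑ _j ∈ Finset.range n, ∑ i' ∈ Finset.range m,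
              (n : ℝ) * (if i = i' then (1:ℝ) else 0) := by
              refine Finset.sum_congr rfl fun i _ => Finset.sum_congr rfl fun _ _ => inner i
          _ = ∑ i ∈ Finset.range m, ∑ _j ∈ Finset.range n, (n : ℝ) := by
              refine Finset.sum_congr rfl fun i hi => Finset.sum_congr rfl fun _ _ => ?_
              rw [← Finset.mul_sum, Finset.sum_ite_eq (Finset.range m) i (fun _ => (1:ℝ)),
                if_pos hi, mul_one]
          _ = (m : ℝ) * n ^ 2 := by
              simp only [Finset.sum_const, Finset.card_range, nsmul_eq_mul, mul_one]
              push_cast; ring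
      · -- ∑_{p,q ∈ S} [p.2 = q.2] = m^2 * n
        rw [hSdef]
        simp_rw [Finset.sum_product]
        calc ∑ _i ∈ Finset.range m, ∑ j ∈ Finset.range n, ∑ _i' ∈ Finset.range m,
              ∑ j' ∈ Finset.range n, (if j = j' then (1:ℝ) else 0)
            = ∑ _i ∈ Finset.range m, ∑ j ∈ Finset.range n, ∑ _i' ∈ Finset.range m, (1:ℝ) := by
              refine Finset.sum_congr rfl fun _ _ => Finset.sum_congr rfl fun j hj =>
                Finset.sum_congr rfl fun _ _ => ?_
              rw [Finset.sum_ite_eq (Finset.range n) j (fun _ => (1:ℝ)), if_pos hj]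
          _ = (m : ℝ) ^ 2 * n := by
              simp only [Finset.sum_const, Finset.card_range, nsmul_eq_mul, mul_one]
              push_cast; ring
    calc ∫ ω, (T ω - c) ^ 2 ∂P
        = ∑ p ∈ S, ∑ q ∈ S, (∫ ω, f p ω * f q ω ∂P - I ^ 2) := hvar_eq
      _ ≤ ∑ p ∈ S, ∑ q ∈ S,
            ((if p.1 = q.1 then (1:ℝ) else 0) + (if p.2 = q.2 then (1:ℝ) else 0)) :=
          Finset.sum_le_sum fun p hp => Finset.sum_le_sum fun q hq => hterm p hp q hq
      _ = (m : ℝ) * n ^ 2 + (m : ℝ) ^ 2 * n := hcount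
  -- bounds on I
  have hI0 : 0 ≤ I := integral_nonneg (fun x => (hhrange x.1 x.2).1)
  have hI1 : I ≤ 1 := by
    calc I ≤ ∫ _x, (1:ℝ) ∂(ν₁.prod ν₂) :=
          integral_mono hint (integrable_const 1) (fun x => (hhrange x.1 x.2).2)
      _ = 1 := by simp
  -- Chebyshev bound for fixed m, n ≥ 1
  have hcheb : ∀ m n : ℕ, 1 ≤ m → 1 ≤ n →
      P {ω | ε < |((m : ℝ) * (n : ℝ))⁻¹ *
          ∑ i ∈ Finset.range m, ∑ j ∈ Finset.range n, h (ξ i ω) (η j ω) - I|}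
        ≤ ENNReal.ofReal (((m:ℝ)⁻¹ + (n:ℝ)⁻¹) / ε ^ 2) := by
    intro m n hm hn
    have hm0 : (0:ℝ) < m := by exact_mod_cast hm
    have hn0 : (0:ℝ) < n := by exact_mod_cast hn
    have hc0 : (0:ℝ) < (m : ℝ) * n := mul_pos hm0 hn0
    have hnested : ∀ ω, ∑ i ∈ Finset.range m, ∑ j ∈ Finset.range n, h (ξ i ω) (η j ω)
        = ∑ p ∈ Finset.range m ×ˢ Finset.range n, f p ω := by
      intro ω; rw [Finset.sum_product]
    have hTm : Measurable (fun ω => ∑ p ∈ Finset.range m ×ˢ Finset.range n, f p ω) :=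
      Finset.measurable_sum _ (fun p _ => hfm p)
    have hTb : ∀ ω, 0 ≤ (∑ p ∈ Finset.range m ×ˢ Finset.range n, f p ω) ∧
        (∑ p ∈ Finset.range m ×ˢ Finset.range n, f p ω) ≤ (m : ℝ) * n := by
      intro ω
      constructor
      · exact Finset.sum_nonneg fun p _ => (hfb p ω).1
      · calc ∑ p ∈ Finset.range m ×ˢ Finset.range n, f p ω
            ≤ ∑ _p ∈ Finset.range m ×ˢ Finset.range n, (1:ℝ) :=
              Finset.sum_le_sum fun p _ => (hfb p ω).2
          _ = (m : ℝ) * n := by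
              simp [Finset.sum_const, Finset.card_product, Finset.card_range]
    set G : Ω → ℝ := fun ω =>
      (((m : ℝ) * n)⁻¹ * (∑ p ∈ Finset.range m ×ˢ Finset.range n, f p ω) - I) ^ 2 with hGdef
    have hGm : Measurable G := ((measurable_const.mul hTm).sub measurable_const).pow_const 2
    have hGb : ∀ ω, |G ω| ≤ 4 := by
      intro ω
      have h1 := (hTb ω).1; have h2 := (hTb ω).2
      have hd : |((m : ℝ) * n)⁻¹ * (∑ p ∈ Finset.range m ×ˢ Finset.range n, f p ω) - I| ≤ 2 := by
        rw [abs_le]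
        constructor
        · have : 0 ≤ ((m : ℝ) * n)⁻¹ * ∑ p ∈ Finset.range m ×ˢ Finset.range n, f p ω :=
            mul_nonneg (inv_nonneg.mpr hc0.le) h1
          linarith
        · have h3 : ((m : ℝ) * n)⁻¹ * (∑ p ∈ Finset.range m ×ˢ Finset.range n, f p ω)
              ≤ ((m : ℝ) * n)⁻¹ * ((m : ℝ) * n) :=
            mul_le_mul_of_nonneg_left h2 (inv_nonneg.mpr hc0.le)
          rw [inv_mul_cancel₀ hc0.ne'] at h3
          linarith
      rw [hGdef]
      calc |(((m : ℝ) * n)⁻¹ * (∑ p ∈ Finset.range m ×ˢ Finset.range n, f p ω) - I) ^ 2|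
          = |((m : ℝ) * n)⁻¹ * (∑ p ∈ Finset.range m ×ˢ Finset.range n, f p ω) - I| ^ 2 := by
            rw [abs_pow]
        _ ≤ 2 ^ 2 := pow_le_pow_left₀ (abs_nonneg _) hd 2
        _ = 4 := by norm_num
    have hGint : Integrable G P := aux_integrable_of_bounded hGm hGb
    have hGle : ∫ ω, G ω ∂P ≤ (m:ℝ)⁻¹ + (n:ℝ)⁻¹ := by
      have hGeq : ∀ ω, G ω = (((m : ℝ) * n)⁻¹) ^ 2 *
          ((∑ p ∈ Finset.range m ×ˢ Finset.range n, f p ω) - (m : ℝ) * n * I) ^ 2 := by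
        intro ω; rw [hGdef]; field_simp
      simp_rw [hGeq]
      rw [integral_const_mul]
      calc (((m : ℝ) * n)⁻¹) ^ 2 *
            ∫ ω, ((∑ p ∈ Finset.range m ×ˢ Finset.range n, f p ω) - (m : ℝ) * n * I) ^ 2 ∂P
          ≤ (((m : ℝ) * n)⁻¹) ^ 2 * ((m : ℝ) * n ^ 2 + (m : ℝ) ^ 2 * n) := by
            refine mul_le_mul_of_nonneg_left ?_ (by positivity)
            have := hvar m n
            convert this using 3
        _ = (m:ℝ)⁻¹ + (n:ℝ)⁻¹ := by field_simp
    have hmar := mul_meas_ge_le_integral_of_nonneg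
      (ae_of_all P (fun ω => sq_nonneg
        (((m : ℝ) * n)⁻¹ * (∑ p ∈ Finset.range m ×ˢ Finset.range n, f p ω) - I))) hGint (ε ^ 2)
    have hsub : {ω | ε < |((m : ℝ) * (n : ℝ))⁻¹ *
          ∑ i ∈ Finset.range m, ∑ j ∈ Finset.range n, h (ξ i ω) (η j ω) - I|}
        ⊆ {ω | ε ^ 2 ≤ G ω} := by
      intro ω hω
      simp only [Set.mem_setOf_eq, hnested ω] at hω
      simp only [Set.mem_setOf_eq, hGdef]
      calc ε ^ 2 ≤ |((m : ℝ) * n)⁻¹ *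
            (∑ p ∈ Finset.range m ×ˢ Finset.range n, f p ω) - I| ^ 2 :=
            pow_le_pow_left₀ hε.le hω.le 2
        _ = _ := sq_abs _
    refine le_trans (measure_mono hsub) ?_
    rw [ENNReal.le_ofReal_iff_toReal_le (measure_ne_top P _) (by positivity)]
    have hε2 : (0:ℝ) < ε ^ 2 := by positivity
    rw [le_div_iff₀ hε2]
    calc (P {ω | ε ^ 2 ≤ G ω}).toReal * ε ^ 2
        = ε ^ 2 * (P {ω | ε ^ 2 ≤ G ω}).toReal := by ring
      _ ≤ ∫ ω, G ω ∂P := hmar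
      _ ≤ (m:ℝ)⁻¹ + (n:ℝ)⁻¹ := hGle
  -- pass to the limit
  simp only [hEij]
  set L := Filter.comap (fun mn : ℕ × ℕ => min mn.1 mn.2) atTop with hLdef
  have hmin : Tendsto (fun mn : ℕ × ℕ => min mn.1 mn.2) L atTop := tendsto_comap
  have hm1 : Tendsto (fun mn : ℕ × ℕ => mn.1) L atTop :=
    tendsto_atTop_mono (fun mn => min_le_left _ _) hmin
  have hn1 : Tendsto (fun mn : ℕ × ℕ => mn.2) L atTop :=
    tendsto_atTop_mono (fun mn => min_le_right _ _) hmin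
  have hbnd : Tendsto (fun mn : ℕ × ℕ =>
      ENNReal.ofReal (((mn.1:ℝ)⁻¹ + (mn.2:ℝ)⁻¹) / ε ^ 2)) L (𝓝 0) := by
    have h1 : Tendsto (fun mn : ℕ × ℕ => ((mn.1 : ℕ) : ℝ)⁻¹) L (𝓝 0) :=
      tendsto_inv_atTop_zero.comp (tendsto_natCast_atTop_atTop.comp hm1)
    have h2 : Tendsto (fun mn : ℕ × ℕ => ((mn.2 : ℕ) : ℝ)⁻¹) L (𝓝 0) :=
      tendsto_inv_atTop_zero.comp (tendsto_natCast_atTop_atTop.comp hn1)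
    have h3 : Tendsto (fun mn : ℕ × ℕ => ((mn.1:ℝ)⁻¹ + (mn.2:ℝ)⁻¹) / ε ^ 2) L (𝓝 0) := by
      have := (h1.add h2).div_const (ε ^ 2)
      simpa using this
    have := ENNReal.tendsto_ofReal h3
    simpa using this
  refine tendsto_of_tendsto_of_tendsto_of_le_of_le' tendsto_const_nhds hbnd
    (Eventually.of_forall fun mn => zero_le) ?_
  have hev : ∀ᶠ mn : ℕ × ℕ in L, 1 ≤ min mn.1 mn.2 := hmin.eventually (eventually_ge_atTop 1)
  filter_upwards [hev] with mn hmn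
  exact hcheb mn.1 mn.2 (le_trans (le_min_iff.mp hmn).1 le_rfl)
    (le_trans (le_min_iff.mp hmn).2 le_rfl)
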